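/- Deterministic right-invariant error dynamics (noise-free core of Lemma 3): let M = diag(I₃, 0₂) and let N be the 5×5 matrix whose only nonzero entry is a 1 in row 5, column 4. Let v_g be a fixed 5×5 real matrix and v_b : ℝ → ℝ^{5×5} any matrix-valued function. Suppose X, Y : ℝ → ℝ^{5×5} are differentiable, take values in matrices of the block form [[R, p, v], [0_{2×3}, I₂]] with R invertible, and satisfy X′(t) = X(t)·v_b(t) + v_g·X(t) + M·X(t)·N and Y′(t) = Y(t)·v_b(t) + v_g·Y(t) + M·Y(t)·N for all t. Then η(t) := X(t)·Y(t)⁻¹ is differentiable and satisfies η′(t) = v_g·η(t) − η(t)·v_g + M·η(t)·N for all t. -/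

import Mathlib

open Matrix

/-- The `3×2` matrix with columns `p` and `v`. -/
def colPair (p v : Fin 3 → ℝ) : Matrix (Fin 3) (Fin 2) ℝ :=
  Matrix.of fun i j => ![p i, v i] j

/-- The `SE₂(3)`-shaped 5×5 block matrix `[[R, p, v], [0, I₂]]`
(indexed by `Fin 3 ⊕ Fin 2`). -/
def se23 (R : Matrix (Fin 3) (Fin 3) ℝ) (p v : Fin 3 → ℝ) :
    Matrix (Fin 3 ⊕ Fin 2) (Fin 3 ⊕ Fin 2) ℝ :=
  Matrix.fromBlocks R (colPair p v) 0 1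

/-- `M = diag(I₃, 0₂)`. -/
def Mmat : Matrix (Fin 3 ⊕ Fin 2) (Fin 3 ⊕ Fin 2) ℝ :=
  Matrix.fromBlocks 1 0 0 0

/-- `N`: the 5×5 matrix whose only nonzero entry is a `1` in row 5, column 4. -/
def Nmat : Matrix (Fin 3 ⊕ Fin 2) (Fin 3 ⊕ Fin 2) ℝ :=
  Matrix.fromBlocks 0 0 0 !![0, 0; 1, 0]

section Aux

variable {n : Type*} [Fintype n] [DecidableEq n]

/-- entrywise product rule for matrix-valued functions -/
lemma hasDerivAt_mat_mul {A B : ℝ → Matrix n n ℝ} {A' B' : Matrix n n ℝ} {t : ℝ}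
    (hA : ∀ i j, HasDerivAt (fun s => A s i j) (A' i j) t)
    (hB : ∀ i j, HasDerivAt (fun s => B s i j) (B' i j) t) (i j : n) :
    HasDerivAt (fun s => (A s * B s) i j) ((A' * B t + A t * B') i j) t := by
  simp only [Matrix.mul_apply, Matrix.add_apply, ← Finset.sum_add_distrib]
  exact HasDerivAt.fun_sum fun k _ => (hA i k).mul (hB k j)

lemma differentiableAt_mat_det {A : ℝ → Matrix n n ℝ} {t : ℝ}
    (hA : ∀ i j, DifferentiableAt ℝ (fun s => A s i j) t) :
    DifferentiableAt ℝ (fun s => (A s).det) t := by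
  simp only [Matrix.det_apply']
  exact DifferentiableAt.fun_sum fun σ _ =>
    ((DifferentiableAt.fun_finsetProd (fun i _ => hA (σ i) i))).const_mul _

lemma differentiableAt_mat_inv {A : ℝ → Matrix n n ℝ} {t : ℝ}
    (hA : ∀ i j, DifferentiableAt ℝ (fun s => A s i j) t)
    (hdet : (A t).det ≠ 0) (i j : n) :
    DifferentiableAt ℝ (fun s => (A s)⁻¹ i j) t := by
  have heq : ∀ s, (A s)⁻¹ i j = ((A s).det)⁻¹ * (A s).adjugate i j := by
    intro s
    rw [Matrix.inv_def, Matrix.smul_apply, Ring.inverse_eq_inv, smul_eq_mul]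
  simp only [heq, Matrix.adjugate_apply]
  refine DifferentiableAt.mul ((differentiableAt_mat_det hA).inv hdet)
    (differentiableAt_mat_det ?_)
  intro a b
  by_cases h : a = j
  · simp only [Matrix.updateRow_apply, h, if_true]
    exact differentiableAt_const _
  · simp only [Matrix.updateRow_apply, h, if_false]
    exact hA a b

end Aux

/-- shape predicate: `[[R, B],[0, 1]]` -/
def Shp (A : Matrix (Fin 3 ⊕ Fin 2) (Fin 3 ⊕ Fin 2) ℝ) : Prop :=
  ∃ R B, A = Matrix.fromBlocks R B 0 1

lemma shp_mul {A C : Matrix (Fin 3 ⊕ Fin 2) (Fin 3 ⊕ Fin 2) ℝ} (hA : Shp A) (hC : Shp C) :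
    Shp (A * C) := by
  obtain ⟨R, B, rfl⟩ := hA
  obtain ⟨R', B', rfl⟩ := hC
  exact ⟨R * R', R * B' + B, by simp [Matrix.fromBlocks_multiply]⟩

lemma nmat_absorb {A : Matrix (Fin 3 ⊕ Fin 2) (Fin 3 ⊕ Fin 2) ℝ} (hA : Shp A) :
    Nmat * A = Nmat := by
  obtain ⟨R, B, rfl⟩ := hA
  simp [Nmat, Matrix.fromBlocks_multiply]

lemma key_identity {A C : Matrix (Fin 3 ⊕ Fin 2) (Fin 3 ⊕ Fin 2) ℝ} (hA : Shp A) (hC : Shp C) :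
    Mmat * (A * C) * Nmat = A * (Mmat * C * Nmat) + Mmat * A * Nmat := by
  obtain ⟨R, B, rfl⟩ := hA
  obtain ⟨R', B', rfl⟩ := hC
  simp [Mmat, Nmat, Matrix.fromBlocks_multiply, Matrix.fromBlocks_add, Matrix.mul_add,
    Matrix.add_mul, Matrix.mul_assoc]

lemma shp_inv {A : Matrix (Fin 3 ⊕ Fin 2) (Fin 3 ⊕ Fin 2) ℝ} {R B}
    (hR : IsUnit R.det) (hA : A = Matrix.fromBlocks R B 0 1) :
    A⁻¹ = Matrix.fromBlocks R⁻¹ (-(R⁻¹ * B)) 0 1 := by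
  subst hA
  apply Matrix.inv_eq_right_inv
  rw [Matrix.fromBlocks_multiply]
  simp [Matrix.mul_nonsing_inv R hR, Matrix.mul_neg, ← Matrix.mul_assoc,
    Matrix.fromBlocks_one]

/-- Noise-free core of Lemma 3: if `X` and `Y` both solve the IMU kinematics
`Ẋ = X v_b + v_g X + M X N` (entrywise derivatives) and take `SE₂(3)`-shaped values
with invertible rotation blocks, then the right-invariant error `η = X Y⁻¹` satisfies
`η̇ = v_g η − η v_g + M η N`. -/
theorem right_invariant_error_dynamics
    (vg : Matrix (Fin 3 ⊕ Fin 2) (Fin 3 ⊕ Fin 2) ℝ)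
    (vb : ℝ → Matrix (Fin 3 ⊕ Fin 2) (Fin 3 ⊕ Fin 2) ℝ)
    (X Y : ℝ → Matrix (Fin 3 ⊕ Fin 2) (Fin 3 ⊕ Fin 2) ℝ)
    (hXform : ∀ t, ∃ R p v, IsUnit (Matrix.det R) ∧ X t = se23 R p v)
    (hYform : ∀ t, ∃ R p v, IsUnit (Matrix.det R) ∧ Y t = se23 R p v)
    (hX : ∀ t i j, HasDerivAt (fun s => X s i j)
      ((X t * vb t + vg * X t + Mmat * X t * Nmat) i j) t)
    (hY : ∀ t i j, HasDerivAt (fun s => Y s i j)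
      ((Y t * vb t + vg * Y t + Mmat * Y t * Nmat) i j) t) :
    ∀ t i j, HasDerivAt (fun s => (X s * (Y s)⁻¹) i j)
      ((vg * (X t * (Y t)⁻¹) - (X t * (Y t)⁻¹) * vg +
        Mmat * (X t * (Y t)⁻¹) * Nmat) i j) t := by
  intro t i j
  -- unit determinants of Y
  have hunit : ∀ s, IsUnit (Y s).det := by
    intro s
    obtain ⟨R, p, v, hR, hYs⟩ := hYform s
    rw [hYs, se23, Matrix.det_fromBlocks_zero₂₁]
    simpa using hR
  set Z : ℝ → Matrix (Fin 3 ⊕ Fin 2) (Fin 3 ⊕ Fin 2) ℝ := fun s => (Y s)⁻¹ with hZdef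
  -- differentiability of each entry of Z at t
  have hZdiff : ∀ i j, DifferentiableAt ℝ (fun s => Z s i j) t := by
    intro i j
    exact differentiableAt_mat_inv (fun i j => (hY t i j).differentiableAt)
      (hunit t).ne_zero i j
  set D : Matrix (Fin 3 ⊕ Fin 2) (Fin 3 ⊕ Fin 2) ℝ :=
    Matrix.of (fun i j => deriv (fun s => Z s i j) t) with hDdef
  have hZhas : ∀ i j, HasDerivAt (fun s => Z s i j) (D i j) t := fun i j =>
    (hZdiff i j).hasDerivAt
  set Y' := Y t * vb t + vg * Y t + Mmat * Y t * Nmat with hY'def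
  set X' := X t * vb t + vg * X t + Mmat * X t * Nmat with hX'def
  -- Y * Z = 1 for all s, hence derivative of Y*Z is 0
  have hYZ : ∀ s, Y s * Z s = 1 := fun s => Matrix.mul_nonsing_inv _ (hunit s)
  have hZY : Z t * Y t = 1 := Matrix.nonsing_inv_mul _ (hunit t)
  have hprodzero : Y' * Z t + Y t * D = 0 := by
    ext i j
    have h1 : HasDerivAt (fun s => (Y s * Z s) i j) ((Y' * Z t + Y t * D) i j) t :=
      hasDerivAt_mat_mul (hY t) hZhas i j
    have h2 : HasDerivAt (fun s => (Y s * Z s) i j) 0 t := by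
      have : (fun s => (Y s * Z s) i j) = fun _ => (1 : Matrix (Fin 3 ⊕ Fin 2) (Fin 3 ⊕ Fin 2) ℝ) i j := by
        funext s; rw [hYZ s]
      rw [this]; exact hasDerivAt_const _ _
    simpa using h1.unique h2
  have hD : D = -(Z t * (Y' * Z t)) := by
    have h3 : Y t * D = -(Y' * Z t) := eq_neg_of_add_eq_zero_right hprodzero
    calc D = (Z t * Y t) * D := by rw [hZY, one_mul]
    _ = Z t * (Y t * D) := by rw [Matrix.mul_assoc]
    _ = -(Z t * (Y' * Z t)) := by rw [h3, Matrix.mul_neg]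
  -- shapes
  have hShpY : Shp (Y t) := by
    obtain ⟨R, p, v, hR, hYs⟩ := hYform t; exact ⟨R, _, hYs⟩
  have hShpZ : Shp (Z t) := by
    obtain ⟨R, p, v, hR, hYs⟩ := hYform t
    exact ⟨R⁻¹, -(R⁻¹ * colPair p v), shp_inv hR hYs⟩
  have hShpX : Shp (X t) := by
    obtain ⟨R, p, v, hR, hXs⟩ := hXform t; exact ⟨R, _, hXs⟩
  have hShpη : Shp (X t * Z t) := shp_mul hShpX hShpZ
  have hNZ : Nmat * Z t = Nmat := nmat_absorb hShpZ
  have hηY : X t * Z t * Y t = X t := by rw [Matrix.mul_assoc, hZY, mul_one]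
  have hkey : Mmat * (X t) * Nmat = (X t * Z t) * (Mmat * Y t * Nmat) + Mmat * (X t * Z t) * Nmat := by
    have := key_identity hShpη hShpY
    rwa [hηY] at this
  -- the actual derivative
  have hfinal : X' * Z t + X t * D =
      vg * (X t * Z t) - (X t * Z t) * vg + Mmat * (X t * Z t) * Nmat := by
    rw [hD, hX'def, hY'def]
    have hZY' : ∀ A : Matrix (Fin 3 ⊕ Fin 2) (Fin 3 ⊕ Fin 2) ℝ, Z t * (Y t * A) = A := by
      intro A; rw [← Matrix.mul_assoc, hZY, one_mul]
    have hkey' := hkey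
    simp only [Matrix.mul_assoc] at hkey' ⊢
    simp only [Matrix.add_mul, Matrix.mul_add, Matrix.mul_neg, Matrix.neg_mul,
      Matrix.mul_assoc, hNZ, hZY', hYZ t, mul_one, Matrix.mul_one]
    rw [hkey']
    abel
  exact hfinal ▸ hasDerivAt_mat_mul (hX t) hZhas i j
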